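/- arXiv:1105.1943 — 3 statements merged into one kernel-verified Lean document; each statement's English description precedes it below -/
import Mathlib

section
/- For any parameters S, N, K ∈ ℕ with S, N, K ≥ 1 and ρ > 0, there is exactly one real root x̄ of the cubic p(x) = x³ − x²(2 − S/N − 1/K) + x(1 − S/N − 1/K + S/(NK)·(1+ρ)) − (S/(NK))·ρ satisfying both 0 < x̄ < 1 and x̄ > 1 − S/N. -/
set_option maxHeartbeats 800000

/-- No two distinct admissible roots. -/
lemma cubic_no_two_roots (s k ρ u v : ℝ) (hs : 0 < s) (hk : 0 < k) (hρ : 0 < ρ)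
    (hu0 : 0 < u) (hu1 : u < 1) (hus : 1 - s < u)
    (hv0 : 0 < v) (hv1 : v < 1) (hvs : 1 - s < v)
    (hne : u ≠ v)
    (hPu : u ^ 3 - u ^ 2 * (2 - s - k) + u * (1 - s - k + s * k * (1 + ρ)) - s * k * ρ = 0)
    (hPv : v ^ 3 - v ^ 2 * (2 - s - k) + v * (1 - s - k + s * k * (1 + ρ)) - s * k * ρ = 0) :
    False := by
  have hd : u - v ≠ 0 := sub_ne_zero.mpr hne
  have h2 : (u - v) * (u ^ 2 + u * v + v ^ 2 - (2 - s - k) * (u + v)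
      + (1 - s - k + s * k * (1 + ρ))) = 0 := by linear_combination hPu - hPv
  have hE1 : u ^ 2 + u * v + v ^ 2 - (2 - s - k) * (u + v)
      + (1 - s - k + s * k * (1 + ρ)) = 0 := by
    rcases mul_eq_zero.mp h2 with h | h
    · exact absurd h hd
    · exact h
  obtain ⟨w, hw⟩ : ∃ w : ℝ, w = (2 - s - k) - u - v := ⟨_, rfl⟩
  have key : ∀ z : ℝ, z ^ 3 - z ^ 2 * (2 - s - k) + z * (1 - s - k + s * k * (1 + ρ))
      - s * k * ρ = (z - u) * (z - v) * (z - w) := by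
    intro z
    rw [hw]
    linear_combination (z - u) * hE1 + hPu
  have h1 : (1 - u) * (1 - v) * (1 - w) = s * k := by linear_combination -(key 1)
  have h0 : u * v * w = s * k * ρ := by linear_combination key 0
  have hswv : (u - (1 - s)) * (v - (1 - s)) * (w - (1 - s)) = k * s ^ 2 * ρ := by
    linear_combination key (1 - s)
  have hw1 : w < 1 := by
    nlinarith [mul_pos (sub_pos.2 hu1) (sub_pos.2 hv1), mul_pos hs hk]
  rcases lt_trichotomy s 1 with hlt | heqs | hgt
  · -- s < 1
    have hws : 1 - s < w := by
      nlinarith [mul_pos (sub_pos.2 hus) (sub_pos.2 hvs),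
        mul_pos hk (mul_pos (pow_pos hs 2) hρ)]
    have hpu : (0:ℝ) < u - (1 - s) := by linarith
    have hpv : (0:ℝ) < v - (1 - s) := by linarith
    have hpw : (0:ℝ) < w - (1 - s) := by linarith
    have hbu : u - (1 - s) < s * u := by
      nlinarith [mul_pos (by linarith : (0:ℝ) < 1 - s) (by linarith : (0:ℝ) < 1 - u)]
    have hbv : v - (1 - s) < s * v := by
      nlinarith [mul_pos (by linarith : (0:ℝ) < 1 - s) (by linarith : (0:ℝ) < 1 - v)]
    have hbw : w - (1 - s) < s * w := by
      nlinarith [mul_pos (by linarith : (0:ℝ) < 1 - s) (by linarith : (0:ℝ) < 1 - w)]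
    have step1 : (u - (1 - s)) * (v - (1 - s)) < (s * u) * (s * v) :=
      mul_lt_mul'' hbu hbv hpu.le hpv.le
    have step2 : (u - (1 - s)) * (v - (1 - s)) * (w - (1 - s)) < (s * u) * (s * v) * (s * w) :=
      mul_lt_mul'' step1 hbw (mul_nonneg hpu.le hpv.le) hpw.le
    have hR : (s * u) * (s * v) * (s * w) = s ^ 4 * (k * ρ) := by
      linear_combination s ^ 3 * h0
    rw [hswv, hR] at step2
    have big : (0:ℝ) < ((1 - s) * (1 + s)) * (k * ρ * (s * s)) :=
      mul_pos (mul_pos (by linarith) (by linarith)) (by positivity)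
    nlinarith [step2, big]
  · -- s = 1
    subst heqs
    have hw0 : 0 < w := by
      nlinarith [mul_pos hu0 hv0, mul_pos (mul_pos one_pos hk) hρ, h0]
    have heq2 : u * v + u * w + v * w = u * v * w := by
      linear_combination h1 + hw
    nlinarith [mul_pos (mul_pos hu0 hv0) (sub_pos.2 hw1), mul_pos hu0 hw0,
      mul_pos hv0 hw0]
  · -- s > 1
    have hw0 : 0 < w := by
      nlinarith [mul_pos hu0 hv0, mul_pos (mul_pos hs hk) hρ, h0]
    have hbu : s * u < u - (1 - s) := by
      nlinarith [mul_pos (by linarith : (0:ℝ) < s - 1) (by linarith : (0:ℝ) < 1 - u)]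
    have hbv : s * v < v - (1 - s) := by
      nlinarith [mul_pos (by linarith : (0:ℝ) < s - 1) (by linarith : (0:ℝ) < 1 - v)]
    have hbw : s * w < w - (1 - s) := by
      nlinarith [mul_pos (by linarith : (0:ℝ) < s - 1) (by linarith : (0:ℝ) < 1 - w)]
    have hpu : (0:ℝ) < s * u := mul_pos hs hu0
    have hpv : (0:ℝ) < s * v := mul_pos hs hv0
    have hpw : (0:ℝ) < s * w := mul_pos hs hw0
    have step1 : (s * u) * (s * v) < (u - (1 - s)) * (v - (1 - s)) :=
      mul_lt_mul'' hbu hbv hpu.le hpv.le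
    have step2 : (s * u) * (s * v) * (s * w) < (u - (1 - s)) * (v - (1 - s)) * (w - (1 - s)) :=
      mul_lt_mul'' step1 hbw (mul_nonneg hpu.le hpv.le) hpw.le
    have hR : (s * u) * (s * v) * (s * w) = s ^ 4 * (k * ρ) := by
      linear_combination s ^ 3 * h0
    rw [hswv, hR] at step2
    have big : (0:ℝ) < ((s - 1) * (s + 1)) * (k * ρ * (s * s)) :=
      mul_pos (mul_pos (by linarith) (by linarith)) (by positivity)
    nlinarith [step2, big]

lemma cubic_aux (s k ρ : ℝ) (hs : 0 < s) (hk : 0 < k) (hρ : 0 < ρ) :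
    ∃! x : ℝ, (0 < x ∧ x < 1 ∧ 1 - s < x) ∧
      x ^ 3 - x ^ 2 * (2 - s - k) + x * (1 - s - k + s * k * (1 + ρ)) - s * k * ρ = 0 := by
  set f : ℝ → ℝ := fun x =>
    x ^ 3 - x ^ 2 * (2 - s - k) + x * (1 - s - k + s * k * (1 + ρ)) - s * k * ρ with hf
  have hval : ∀ x : ℝ, f x =
      x ^ 3 - x ^ 2 * (2 - s - k) + x * (1 - s - k + s * k * (1 + ρ)) - s * k * ρ := by
    intro x; rw [hf]
  have hcont : Continuous f := by rw [hf]; continuity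
  have hf1 : f 1 = s * k := by rw [hval]; ring
  have hf0 : f 0 = -(s * k * ρ) := by rw [hval]; ring
  have hfs : f (1 - s) = -(k * s ^ 2 * ρ) := by rw [hval]; ring
  set a : ℝ := max (1 - s) 0 with hadef
  have ha0 : (0:ℝ) ≤ a := le_max_right _ _
  have has : 1 - s ≤ a := le_max_left _ _
  have ha1 : a < 1 := max_lt (by linarith) one_pos
  have hfa : f a < 0 := by
    rcases le_or_gt s 1 with h | h
    · have haeq : a = 1 - s := by rw [hadef]; exact max_eq_left (by linarith)
      rw [haeq, hfs]
      nlinarith [mul_pos hk (mul_pos (pow_pos hs 2) hρ)]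
    · have haeq : a = 0 := by rw [hadef]; exact max_eq_right (by linarith)
      rw [haeq, hf0]
      nlinarith [mul_pos (mul_pos hs hk) hρ]
  have hmem : (0:ℝ) ∈ Set.Ioo (f a) (f 1) := ⟨hfa, by rw [hf1]; positivity⟩
  obtain ⟨x, hxIoo, hfx⟩ := intermediate_value_Ioo ha1.le hcont.continuousOn hmem
  have hx0 : 0 < x := lt_of_le_of_lt ha0 hxIoo.1
  have hxs : 1 - s < x := lt_of_le_of_lt has hxIoo.1
  have hfx' : x ^ 3 - x ^ 2 * (2 - s - k) + x * (1 - s - k + s * k * (1 + ρ))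
      - s * k * ρ = 0 := by rw [← hval x]; exact hfx
  refine ⟨x, ⟨⟨hx0, hxIoo.2, hxs⟩, hfx'⟩, ?_⟩
  rintro y ⟨⟨hy0, hy1, hys⟩, hPy⟩
  by_contra hne
  exact cubic_no_two_roots s k ρ y x hs hk hρ hy0 hy1 hys hx0 hxIoo.2 hxs hne hPy hfx'

/-- The cubic fixed-point equation of the Rayleigh product channel has exactly
one real root in (0,1) that also satisfies x̄ > 1 - S/N. -/
theorem cubic_unique_admissible_root
    (S N K : ℕ) (hS : 1 ≤ S) (hN : 1 ≤ N) (hK : 1 ≤ K)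
    (ρ : ℝ) (hρ : 0 < ρ) :
    ∃! x : ℝ, (0 < x ∧ x < 1 ∧ 1 - (S : ℝ) / N < x) ∧
      x ^ 3 - x ^ 2 * (2 - (S : ℝ) / N - 1 / K)
        + x * (1 - (S : ℝ) / N - 1 / K + (S : ℝ) / (N * K) * (1 + ρ))
        - (S : ℝ) / (N * K) * ρ = 0 := by
  have hN0 : (0:ℝ) < N := by exact_mod_cast Nat.pos_of_ne_zero (by omega)
  have hS0 : (0:ℝ) < S := by exact_mod_cast Nat.pos_of_ne_zero (by omega)
  have hK0 : (0:ℝ) < K := by exact_mod_cast Nat.pos_of_ne_zero (by omega)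
  have hs : 0 < (S:ℝ) / N := div_pos hS0 hN0
  have hk : 0 < 1 / (K:ℝ) := by positivity
  have hSNK : (S:ℝ) / (↑N * ↑K) = (S:ℝ) / ↑N * (1 / ↑K) := by
    rw [div_mul_div_comm, mul_one]
  rw [hSNK]
  exact cubic_aux ((S:ℝ) / N) (1 / (K:ℝ)) ρ hs hk hρ
end

section
/- Fix constants a, c > 0 and ρ > 0, and consider the scalar fixed-point system in (ḡ, g, δ) ∈ (0,∞)³: ḡ = a/(1 + g·a), g = c·δ/(1 + ḡ·δ), δ = 1/( ḡ·g/δ · b + ρ ) for a fixed b > 0. This system has at most one solution with ḡ, g, δ > 0. -/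
/-- Helper: cleared-form system, assuming `w₂ ≤ w₁`, forces equality. -/
lemma scalar_system_key
    (a b c ρ : ℝ) (ha : 0 < a) (hb : 0 < b) (hc : 0 < c) (hρ : 0 < ρ)
    (u₁ v₁ w₁ u₂ v₂ w₂ : ℝ)
    (hu₁ : 0 < u₁) (hv₁ : 0 < v₁) (hw₁ : 0 < w₁)
    (hu₂ : 0 < u₂) (hv₂ : 0 < v₂) (hw₂ : 0 < w₂)
    (e11 : u₁ * (1 + v₁ * a) = a) (e21 : v₁ * (1 + u₁ * w₁) = c * w₁)
    (e31 : u₁ * v₁ * b + ρ * w₁ = 1)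
    (e12 : u₂ * (1 + v₂ * a) = a) (e22 : v₂ * (1 + u₂ * w₂) = c * w₂)
    (e32 : u₂ * v₂ * b + ρ * w₂ = 1)
    (hw : w₂ ≤ w₁) :
    u₁ = u₂ ∧ v₁ = v₂ ∧ w₁ = w₂ := by
  -- From the third equations, u₁v₁ ≤ u₂v₂
  have huv : u₁ * v₁ ≤ u₂ * v₂ := by nlinarith
  -- Monotonicity of v ↦ a v/(1+va) gives v₁ ≤ v₂
  have hd1 : (0:ℝ) < 1 + v₁ * a := by positivity
  have hd2 : (0:ℝ) < 1 + v₂ * a := by positivity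
  have hvle : v₁ ≤ v₂ := by
    by_contra h
    push_neg at h
    have A : u₁*v₁*((1+v₁*a)*(1+v₂*a)) = a*v₁*(1+v₂*a) := by
      linear_combination v₁*(1+v₂*a)*e11
    have B : u₂*v₂*((1+v₂*a)*(1+v₁*a)) = a*v₂*(1+v₁*a) := by
      linear_combination v₂*(1+v₁*a)*e12
    nlinarith [mul_nonneg (sub_nonneg.mpr huv) (mul_pos hd1 hd2).le]
  -- c - u₂v₂ = v₂/w₂ > 0
  have hcpos : 0 < c - u₂ * v₂ := by nlinarith
  have hcpos1 : c - u₂ * v₂ ≤ c - u₁ * v₁ := by linarith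
  -- v₁ = w₁(c - u₁v₁) ≥ w₂(c - u₂v₂) = v₂
  have hvge : v₂ ≤ v₁ := by nlinarith [mul_le_mul hw hcpos1 hcpos.le hw₁.le]
  have hv : v₁ = v₂ := le_antisymm hvle hvge
  -- then u₁ = u₂
  have hu : u₁ = u₂ := by
    subst hv
    nlinarith
  have hwq : w₁ = w₂ := by
    have : u₁ * v₁ = u₂ * v₂ := by rw [hu, hv]
    nlinarith
  exact ⟨hu, hv, hwq⟩

/-- The scalar fixed-point system ḡ = a/(1+ga), g = cδ/(1+ḡδ), δ = 1/(ḡg b/δ + ρ)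
has at most one positive solution. -/
theorem scalar_system_at_most_one_solution
    (a b c ρ : ℝ) (ha : 0 < a) (hb : 0 < b) (hc : 0 < c) (hρ : 0 < ρ)
    (x y : ℝ × ℝ × ℝ)
    (hx : 0 < x.1 ∧ 0 < x.2.1 ∧ 0 < x.2.2 ∧
      x.1 = a / (1 + x.2.1 * a) ∧
      x.2.1 = c * x.2.2 / (1 + x.1 * x.2.2) ∧
      x.2.2 = 1 / (x.1 * x.2.1 / x.2.2 * b + ρ))
    (hy : 0 < y.1 ∧ 0 < y.2.1 ∧ 0 < y.2.2 ∧
      y.1 = a / (1 + y.2.1 * a) ∧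
      y.2.1 = c * y.2.2 / (1 + y.1 * y.2.2) ∧
      y.2.2 = 1 / (y.1 * y.2.1 / y.2.2 * b + ρ)) :
    x = y := by
  obtain ⟨hu₁, hv₁, hw₁, f11, f21, f31⟩ := hx
  obtain ⟨hu₂, hv₂, hw₂, f12, f22, f32⟩ := hy
  set u₁ := x.1; set v₁ := x.2.1; set w₁ := x.2.2
  set u₂ := y.1; set v₂ := y.2.1; set w₂ := y.2.2
  have d11 : (0:ℝ) < 1 + v₁ * a := by positivity
  have d21 : (0:ℝ) < 1 + u₁ * w₁ := by positivity
  have d31 : (0:ℝ) < u₁ * v₁ / w₁ * b + ρ := by positivity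
  have d12 : (0:ℝ) < 1 + v₂ * a := by positivity
  have d22 : (0:ℝ) < 1 + u₂ * w₂ := by positivity
  have d32 : (0:ℝ) < u₂ * v₂ / w₂ * b + ρ := by positivity
  have e11 : u₁ * (1 + v₁ * a) = a := by
    rw [f11]; field_simp
  have e12 : u₂ * (1 + v₂ * a) = a := by
    rw [f12]; field_simp
  have e21 : v₁ * (1 + u₁ * w₁) = c * w₁ := by
    rw [f21]; field_simp
  have e22 : v₂ * (1 + u₂ * w₂) = c * w₂ := by
    rw [f22]; field_simp
  have e31 : u₁ * v₁ * b + ρ * w₁ = 1 := by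
    have := f31
    rw [eq_div_iff d31.ne'] at this
    field_simp at this
    linarith
  have e32 : u₂ * v₂ * b + ρ * w₂ = 1 := by
    have := f32
    rw [eq_div_iff d32.ne'] at this
    field_simp at this
    linarith
  have key : u₁ = u₂ ∧ v₁ = v₂ ∧ w₁ = w₂ := by
    rcases le_total w₂ w₁ with hw | hw
    · exact scalar_system_key a b c ρ ha hb hc hρ u₁ v₁ w₁ u₂ v₂ w₂ hu₁ hv₁ hw₁
        hu₂ hv₂ hw₂ e11 e21 e31 e12 e22 e32 hw
    · obtain ⟨h1, h2, h3⟩ := scalar_system_key a b c ρ ha hb hc hρ u₂ v₂ w₂ u₁ v₁ w₁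
        hu₂ hv₂ hw₂ hu₁ hv₁ hw₁ e12 e22 e32 e11 e21 e31 hw
      exact ⟨h1.symm, h2.symm, h3.symm⟩
  obtain ⟨h1, h2, h3⟩ := key
  exact Prod.ext h1 (Prod.ext h2 h3)
end

section
/- Let K = 1, N = n = 1, S = 1, so all matrices are scalars: T = t > 0, Q = q > 0, s₁ = s > 0, R = r > 0, ρ > 0. Then the fundamental system ḡ = tq/(1 + g·tq), g = s·δ/(1 + ḡ·s·δ), δ = r/( ḡ·g/δ · r + ρ ) has a unique solution with ḡ, g, δ > 0, and this solution depends continuously on ρ ∈ (0,∞). -/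
open Set

private lemma psi_strictAnti (c ρ : ℝ) (hc : 0 < c) (hρ : 0 < ρ) :
    StrictAnti (fun p : ℝ => c * (1 - p) ^ 3 - ρ * p) := by
  intro x y hxy
  simp only
  have hq : (0:ℝ) ≤ (1-x)^2 + (1-x)*(1-y) + (1-y)^2 := by
    nlinarith [sq_nonneg ((1-x)+(1-y)), sq_nonneg ((1-x)-(1-y))]
  have h1 : 0 ≤ c * (y - x) * ((1-x)^2 + (1-x)*(1-y) + (1-y)^2) :=
    mul_nonneg (mul_nonneg hc.le (by linarith)) hq
  nlinarith [mul_pos hρ (sub_pos.2 hxy)]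

private lemma root_exu (c : ℝ) (hc : 0 < c) (ρ : ℝ) (hρ : 0 < ρ) :
    ∃! p : ℝ, p ∈ Ioo (0:ℝ) 1 ∧ c * (1 - p) ^ 3 = ρ * p := by
  have hcont : ContinuousOn (fun p : ℝ => c * (1 - p) ^ 3 - ρ * p) (Icc 0 1) := by
    fun_prop
  have h0 : (0:ℝ) ∈ Ioo ((fun p : ℝ => c*(1-p)^3 - ρ*p) 1) ((fun p : ℝ => c*(1-p)^3 - ρ*p) 0) := by
    constructor <;> simp <;> nlinarith
  obtain ⟨p, hp, hroot⟩ := intermediate_value_Ioo' zero_le_one hcont h0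
  refine ⟨p, ⟨hp, by simp only at hroot; linarith⟩, ?_⟩
  rintro y ⟨hy, hyeq⟩
  apply (psi_strictAnti c ρ hc hρ).injective
  simp only at hroot ⊢
  linarith

private lemma sys_to_root (t q s r ρ a b d : ℝ)
    (ht : 0 < t) (hq : 0 < q) (hs : 0 < s) (hr : 0 < r) (hρ : 0 < ρ)
    (ha : 0 < a) (hb : 0 < b) (hd : 0 < d)
    (e1 : a = t * q / (1 + b * (t * q)))
    (e2 : b = s * d / (1 + a * s * d))
    (e3 : d = r / (a * b / d * r + ρ)) :
    a * b ∈ Ioo (0:ℝ) 1 ∧ t*q*s*r * (1 - a*b)^3 = ρ * (a*b) ∧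
    a = t*q*(1 - a*b) ∧ b = s*r*(1-a*b)^2/ρ ∧ d = r*(1-a*b)/ρ := by
  have hden1 : (0:ℝ) < 1 + b * (t*q) := by positivity
  have hden2 : (0:ℝ) < 1 + a * s * d := by positivity
  have hden3 : (0:ℝ) < a * b / d * r + ρ := by positivity
  rw [eq_div_iff hden1.ne'] at e1
  rw [eq_div_iff hden2.ne'] at e2
  rw [eq_div_iff hden3.ne'] at e3
  have e3' : a * b * r + ρ * d = r := by
    field_simp [hd.ne'] at e3
    linarith
  have hablt : a * b < 1 := by nlinarith [mul_pos hρ hd]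
  have h1 : ρ * d = r * (1 - a*b) := by linear_combination e3'
  have ha' : a = t*q*(1-a*b) := by linear_combination e1
  have hb' : b = s*d*(1-a*b) := by linear_combination e2
  have hb'' : b = s*r*(1-a*b)^2/ρ := by
    rw [eq_div_iff hρ.ne']
    linear_combination ρ*hb' + s*(1-a*b)*h1
  have hd' : d = r*(1-a*b)/ρ := by
    rw [eq_div_iff hρ.ne']
    linear_combination h1
  refine ⟨⟨mul_pos ha hb, hablt⟩, ?_, ha', hb'', hd'⟩
  linear_combination (-(ρ*b))*ha' + (-(ρ*t*q*(1-a*b)))*hb' + (-(t*q*s*(1-a*b)^2))*h1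

private lemma root_to_sys (t q s r ρ p : ℝ)
    (ht : 0 < t) (hq : 0 < q) (hs : 0 < s) (hr : 0 < r) (hρ : 0 < ρ)
    (hp : p ∈ Ioo (0:ℝ) 1) (heq : t*q*s*r * (1-p)^3 = ρ * p) :
    0 < t*q*(1-p) ∧ 0 < s*r*(1-p)^2/ρ ∧ 0 < r*(1-p)/ρ ∧
    t*q*(1-p) = t * q / (1 + (s*r*(1-p)^2/ρ) * (t * q)) ∧
    s*r*(1-p)^2/ρ = s * (r*(1-p)/ρ) / (1 + (t*q*(1-p)) * s * (r*(1-p)/ρ)) ∧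
    r*(1-p)/ρ = r / ((t*q*(1-p)) * (s*r*(1-p)^2/ρ) / (r*(1-p)/ρ) * r + ρ) := by
  obtain ⟨hp0, hp1⟩ := hp
  have h1p : 0 < 1 - p := by linarith
  refine ⟨by positivity, by positivity, by positivity, ?_, ?_, ?_⟩
  · rw [eq_div_iff (by positivity)]
    field_simp
    linear_combination heq
  · rw [eq_div_iff (by positivity)]
    field_simp
    linear_combination heq
  · rw [eq_div_iff (by positivity)]
    field_simp
    linear_combination heq
private lemma root_cont (c : ℝ) (hc : 0 < c) (P : ℝ → ℝ)
    (hP : ∀ ρ ∈ Ioi (0:ℝ), P ρ ∈ Ioo (0:ℝ) 1 ∧ c * (1 - P ρ) ^ 3 = ρ * P ρ) :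
    ContinuousOn P (Ioi 0) := by
  intro ρ₀ hρ₀
  have hρ₀' : (0:ℝ) < ρ₀ := hρ₀
  rw [Metric.continuousWithinAt_iff]
  intro ε hε
  obtain ⟨⟨hp0pos, hp0lt⟩, hp0eq⟩ := hP ρ₀ hρ₀
  obtain ⟨ε', hε'pos, hε'lt, hε'le⟩ :
      ∃ ε', 0 < ε' ∧ ε' < ε ∧ ε' ≤ P ρ₀ / 2 := by
    refine ⟨min ε (P ρ₀) / 2, by positivity, ?_, ?_⟩
    · have h := min_le_left ε (P ρ₀); linarith
    · have h := min_le_right ε (P ρ₀); linarith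
  have hx₁pos : 0 < P ρ₀ - ε' := by linarith
  have hx₂pos : 0 < P ρ₀ + ε' := by linarith
  have hA : 0 < c * (1 - (P ρ₀ - ε')) ^ 3 - ρ₀ * (P ρ₀ - ε') := by
    have := psi_strictAnti c ρ₀ hc hρ₀' (show P ρ₀ - ε' < P ρ₀ by linarith)
    simp only at this
    linarith
  have hB : 0 < ρ₀ * (P ρ₀ + ε') - c * (1 - (P ρ₀ + ε')) ^ 3 := by
    have := psi_strictAnti c ρ₀ hc hρ₀' (show P ρ₀ < P ρ₀ + ε' by linarith)
    simp only at this
    linarith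
  obtain ⟨δ, hδpos, hδ1, hδ2⟩ :
      ∃ δ, 0 < δ ∧ δ * (P ρ₀ - ε') ≤ c * (1 - (P ρ₀ - ε')) ^ 3 - ρ₀ * (P ρ₀ - ε') ∧
        δ * (P ρ₀ + ε') ≤ ρ₀ * (P ρ₀ + ε') - c * (1 - (P ρ₀ + ε')) ^ 3 := by
    refine ⟨min ((c * (1 - (P ρ₀ - ε')) ^ 3 - ρ₀ * (P ρ₀ - ε')) / (P ρ₀ - ε'))
      ((ρ₀ * (P ρ₀ + ε') - c * (1 - (P ρ₀ + ε')) ^ 3) / (P ρ₀ + ε')),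
      lt_min (by positivity) (by positivity), ?_, ?_⟩
    · calc _ ≤ ((c * (1 - (P ρ₀ - ε')) ^ 3 - ρ₀ * (P ρ₀ - ε')) / (P ρ₀ - ε')) * (P ρ₀ - ε') :=
        mul_le_mul_of_nonneg_right (min_le_left _ _) hx₁pos.le
      _ = _ := by field_simp
    · calc _ ≤ ((ρ₀ * (P ρ₀ + ε') - c * (1 - (P ρ₀ + ε')) ^ 3) / (P ρ₀ + ε')) * (P ρ₀ + ε') :=
        mul_le_mul_of_nonneg_right (min_le_right _ _) hx₂pos.le
      _ = _ := by field_simp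
  refine ⟨δ, hδpos, ?_⟩
  intro x hx hdist
  have hx' : (0:ℝ) < x := hx
  obtain ⟨⟨hpxpos, hpxlt⟩, hpxeq⟩ := hP x hx
  rw [Real.dist_eq, abs_lt] at hdist
  obtain ⟨hd1, hd2⟩ := hdist
  have hlow : P ρ₀ - ε' < P x := by
    have hpsi : 0 < c * (1 - (P ρ₀ - ε')) ^ 3 - x * (P ρ₀ - ε') := by
      have h1 : (x - ρ₀) * (P ρ₀ - ε') < δ * (P ρ₀ - ε') :=
        mul_lt_mul_of_pos_right hd2 hx₁pos
      nlinarith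
    have hiff := (psi_strictAnti c x hc hx').lt_iff_gt (a := P x) (b := P ρ₀ - ε')
    rw [← hiff]
    linarith [hpxeq]
  have hhigh : P x < P ρ₀ + ε' := by
    have hpsi : c * (1 - (P ρ₀ + ε')) ^ 3 - x * (P ρ₀ + ε') < 0 := by
      have h1 : (ρ₀ - x) * (P ρ₀ + ε') < δ * (P ρ₀ + ε') :=
        mul_lt_mul_of_pos_right (by linarith) hx₂pos
      nlinarith
    have hiff := (psi_strictAnti c x hc hx').lt_iff_gt (a := P ρ₀ + ε') (b := P x)
    rw [← hiff]
    linarith [hpxeq]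
  rw [Real.dist_eq, abs_lt]
  constructor <;> linarith
/-- Fully scalar case of Theorem 1: the system
ḡ = tq/(1 + g tq), g = sδ/(1 + ḡ s δ), δ = r/(ḡ g r/δ + ρ)
has a unique positive solution, which depends continuously on ρ > 0. -/
theorem scalar_fundamental_system_exists_unique_continuous
    (t q s r : ℝ) (ht : 0 < t) (hq : 0 < q) (hs : 0 < s) (hr : 0 < r) :
    let sys : ℝ → ℝ × ℝ × ℝ → Prop := fun ρ v =>
      0 < v.1 ∧ 0 < v.2.1 ∧ 0 < v.2.2 ∧
      v.1 = t * q / (1 + v.2.1 * (t * q)) ∧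
      v.2.1 = s * v.2.2 / (1 + v.1 * s * v.2.2) ∧
      v.2.2 = r / (v.1 * v.2.1 / v.2.2 * r + ρ)
    (∀ ρ : ℝ, 0 < ρ → ∃! v : ℝ × ℝ × ℝ, sys ρ v) ∧
    (∀ f : ℝ → ℝ × ℝ × ℝ, (∀ ρ : ℝ, 0 < ρ → sys ρ (f ρ)) →
      ContinuousOn f (Set.Ioi 0)) := by
  intro sys
  have hc : 0 < t * q * s * r := by positivity
  have hsys : ∀ (ρ : ℝ) (v : ℝ × ℝ × ℝ), sys ρ v ↔
      (0 < v.1 ∧ 0 < v.2.1 ∧ 0 < v.2.2 ∧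
      v.1 = t * q / (1 + v.2.1 * (t * q)) ∧
      v.2.1 = s * v.2.2 / (1 + v.1 * s * v.2.2) ∧
      v.2.2 = r / (v.1 * v.2.1 / v.2.2 * r + ρ)) := fun _ _ => Iff.rfl
  constructor
  · intro ρ hρ
    obtain ⟨p, ⟨hpmem, hpeq⟩, hpuniq⟩ := root_exu (t*q*s*r) hc ρ hρ
    refine ⟨(t*q*(1-p), s*r*(1-p)^2/ρ, r*(1-p)/ρ), ?_, ?_⟩
    · refine (hsys ρ _).mpr ?_
      obtain ⟨h1, h2, h3, h4, h5, h6⟩ := root_to_sys t q s r ρ p ht hq hs hr hρ hpmem hpeq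
      exact ⟨h1, h2, h3, h4, h5, h6⟩
    · rintro ⟨v1, v2, v3⟩ hv
      obtain ⟨ha, hb, hd, e1, e2, e3⟩ := (hsys ρ (v1, v2, v3)).1 hv
      obtain ⟨hmem', heq', ha', hb', hd'⟩ :=
        sys_to_root t q s r ρ v1 v2 v3 ht hq hs hr hρ ha hb hd e1 e2 e3
      have hp' : v1 * v2 = p := hpuniq _ ⟨hmem', heq'⟩
      rw [Prod.mk.injEq, Prod.mk.injEq]
      exact ⟨by rw [ha', hp'], by rw [hb', hp'], by rw [hd', hp']⟩
  · intro f hf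
    have key : ∀ ρ ∈ Set.Ioi (0:ℝ),
        ((f ρ).1 * (f ρ).2.1 ∈ Set.Ioo (0:ℝ) 1 ∧
          t*q*s*r * (1 - (f ρ).1 * (f ρ).2.1)^3 = ρ * ((f ρ).1 * (f ρ).2.1)) ∧
        f ρ = (t*q*(1 - (f ρ).1 * (f ρ).2.1),
               s*r*(1 - (f ρ).1 * (f ρ).2.1)^2/ρ, r*(1 - (f ρ).1 * (f ρ).2.1)/ρ) := by
      intro ρ hρ
      obtain ⟨ha, hb, hd, e1, e2, e3⟩ := (hsys ρ (f ρ)).1 (hf ρ hρ)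
      obtain ⟨hmem, heq, ha', hb', hd'⟩ :=
        sys_to_root t q s r ρ (f ρ).1 (f ρ).2.1 (f ρ).2.2 ht hq hs hr hρ ha hb hd e1 e2 e3
      refine ⟨⟨hmem, heq⟩, ?_⟩
      rw [Prod.ext_iff, Prod.ext_iff]
      exact ⟨ha', hb', hd'⟩
    have hPcont : ContinuousOn (fun ρ => (f ρ).1 * (f ρ).2.1) (Set.Ioi 0) :=
      root_cont (t*q*s*r) hc _ (fun ρ hρ => (key ρ hρ).1)
    have h1m : ContinuousOn (fun ρ : ℝ => 1 - (f ρ).1 * (f ρ).2.1) (Set.Ioi 0) :=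
      continuousOn_const.sub hPcont
    have hidne : ∀ x ∈ Set.Ioi (0:ℝ), x ≠ 0 := fun x hx => ne_of_gt hx
    have hg : ContinuousOn (fun ρ : ℝ =>
        ((t*q*(1 - (f ρ).1 * (f ρ).2.1),
          s*r*(1 - (f ρ).1 * (f ρ).2.1)^2/ρ,
          r*(1 - (f ρ).1 * (f ρ).2.1)/ρ) : ℝ × ℝ × ℝ)) (Set.Ioi 0) := by
      refine ContinuousOn.prodMk (continuousOn_const.mul h1m) (ContinuousOn.prodMk ?_ ?_)
      · exact ContinuousOn.div (continuousOn_const.mul (h1m.pow 2)) continuousOn_id hidne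
      · exact ContinuousOn.div (continuousOn_const.mul h1m) continuousOn_id hidne
    exact ContinuousOn.congr hg (fun ρ hρ => (key ρ hρ).2)
end
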